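/- 𝒩(𝒬) coincides with the set of all u ∈ C(M,ℝ) such that ∫_M u·Q_ω dμ_ω = 0 for every ω ∈ C(M,ℝ). (Proposition 3.1: 𝒩(𝒬) = ⋂_{g∈c} 𝒩(𝒬̄^g).) -/

import Mathlib

open MeasureTheory
open scoped ENNReal NNReal

variable {M : Type*} [TopologicalSpace M] [MeasurableSpace M]

/-- The transformed Q-curvature `Q_ω = e^{-nω}(Q + Pω)`. -/
noncomputable def Qcurv (n : ℝ) (P : C(M, ℝ) →ₗ[ℝ] C(M, ℝ)) (Q ω : C(M, ℝ)) : C(M, ℝ) :=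
  ⟨fun x => Real.exp (-n * ω x) * (Q x + P ω x),
    (Real.continuous_exp.comp (continuous_const.mul ω.continuous)).mul
      (Q.continuous.add (P ω).continuous)⟩

/-- The conformally rescaled measure `μ_ω`, with density `e^{nω}` w.r.t. `μ`. -/
noncomputable def confMeasure (μ : Measure M) (n : ℝ) (ω : C(M, ℝ)) : Measure M :=
  μ.withDensity fun x => ENNReal.ofReal (Real.exp (n * ω x))

/-- `𝒩(𝒬) = {u ∈ ker P : ∫ u·Q dμ = 0}`. -/
def NQ (μ : Measure M) (P : C(M, ℝ) →ₗ[ℝ] C(M, ℝ)) (Q : C(M, ℝ)) : Set C(M, ℝ) :=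
  {u | P u = 0 ∧ ∫ x, u x * Q x ∂μ = 0}

/-- `ℱ = ⋂_ω ℱ^ω`, where `ℱ^ω` is the set of `f` not `L²(μ_ω)`-orthogonal to `𝒩(𝒬)`. -/
def Fcal (μ : Measure M) (n : ℝ) (P : C(M, ℝ) →ₗ[ℝ] C(M, ℝ)) (Q : C(M, ℝ)) : Set C(M, ℝ) :=
  {f | ∀ ω : C(M, ℝ), ∃ u ∈ NQ μ P Q, ∫ x, f x * u x ∂(confMeasure μ n ω) ≠ 0}

variable [BorelSpace M] [CompactSpace M] [ConnectedSpace M]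
variable (μ : Measure M) [IsFiniteMeasure μ] [Measure.IsOpenPosMeasure μ]
variable (n : ℝ) (P : C(M, ℝ) →ₗ[ℝ] C(M, ℝ)) (Q : C(M, ℝ))

lemma cm_integrable (f : C(M, ℝ)) : Integrable (fun x => f x) μ :=
  f.continuous.integrable_of_hasCompactSupport (HasCompactSupport.of_compactSpace _)

lemma key_integral (u ω : C(M, ℝ)) :
    ∫ x, u x * Qcurv n P Q ω x ∂(confMeasure μ n ω)
      = ∫ x, u x * (Q x + P ω x) ∂μ := by
  have hmeas : Measurable fun x => (Real.exp (n * ω x)).toNNReal :=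
    ((Real.continuous_exp.comp (continuous_const.mul ω.continuous)).measurable).real_toNNReal
  have h1 : confMeasure μ n ω
      = μ.withDensity fun x => ((Real.exp (n * ω x)).toNNReal : ℝ≥0∞) := by
    simp [confMeasure, ENNReal.ofReal]
  rw [h1, integral_withDensity_eq_integral_smul hmeas]
  congr 1
  ext x
  have hpos : (0:ℝ) ≤ Real.exp (n * ω x) := (Real.exp_pos _).le
  simp only [NNReal.smul_def, Real.coe_toNNReal _ hpos, Qcurv, ContinuousMap.coe_mk]
  rw [show (-n * ω x) = -(n * ω x) by ring, Real.exp_neg]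
  field_simp
  rw [smul_eq_mul]; field_simp

theorem stmt9
    (hn : 0 < n)
    (hPc : ∀ c : ℝ, P (ContinuousMap.const M c) = 0)
    (hPsa : ∀ u v : C(M, ℝ), ∫ x, u x * P v x ∂μ = ∫ x, P u x * v x ∂μ) :
    NQ μ P Q =
      {u : C(M, ℝ) | ∀ ω : C(M, ℝ),
        ∫ x, u x * Qcurv n P Q ω x ∂(confMeasure μ n ω) = 0} := by
  ext u
  have hsplit : ∀ ω : C(M, ℝ),
      ∫ x, u x * (Q x + P ω x) ∂μ
        = (∫ x, u x * Q x ∂μ) + ∫ x, P u x * ω x ∂μ := by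
    intro ω
    have h1 : Integrable (fun x => u x * Q x) μ := cm_integrable μ (u * Q)
    have h2 : Integrable (fun x => u x * P ω x) μ := cm_integrable μ (u * P ω)
    have : ∫ x, u x * (Q x + P ω x) ∂μ
        = (∫ x, u x * Q x ∂μ) + ∫ x, u x * P ω x ∂μ := by
      rw [← integral_add h1 h2]; congr 1; ext x; ring
    rw [this, hPsa u ω]
  constructor
  · rintro ⟨hPu, hQ⟩ ω
    rw [key_integral, hsplit, hQ, hPu]
    simp
  · intro h
    have h' : ∀ ω : C(M, ℝ),
        (∫ x, u x * Q x ∂μ) + ∫ x, P u x * ω x ∂μ = 0 := by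
      intro ω; rw [← hsplit, ← key_integral μ n P Q u ω, h ω]
    have hQ0 : ∫ x, u x * Q x ∂μ = 0 := by
      have := h' 0
      simpa using this
    have hPu : P u = 0 := by
      have h2 := h' (P u)
      rw [hQ0, zero_add] at h2
      have hae : (fun x => P u x * P u x) =ᵐ[μ] 0 := by
        rw [← integral_eq_zero_iff_of_nonneg (fun x => mul_self_nonneg _)
          (cm_integrable μ (P u * P u))]
        exact h2
      have heq : (fun x => P u x * P u x) = (0 : M → ℝ) :=
        (Continuous.ae_eq_iff_eq μ (by continuity) continuous_const).mp hae
      ext x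
      have := congrFun heq x
      simpa using mul_self_eq_zero.mp this
    exact ⟨hPu, hQ0⟩
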